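/- Let $G$ be a finite group, $\pi : A(G) \to G$ the unique group homomorphism with $\pi \circ \varphi_G = \mathrm{id}_G$, and $Z_1 = \ker \pi$. Then the quotient $Z_1 / Tor(Z_1)$ of $Z_1$ by its torsion subgroup is isomorphic, as a group, to the free abelian group on the set of conjugacy classes of $G$. -/

import Mathlib

open Rack Quandle

section Aux

variable {G : Type*} [Group G]

/-- The enveloping group is generated by the image of the rack. -/
lemma envel_closure (R : Type*) [Rack R] :
    Subgroup.closure (Set.range (Rack.toEnvelGroup R)) = ⊤ := by
  rw [eq_top_iff]
  rintro x -
  induction x using Quotient.inductionOn with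
  | h a =>
    induction a with
    | unit => exact one_mem _
    | incl y => exact Subgroup.subset_closure ⟨y, rfl⟩
    | mul a b ha hb => exact mul_mem ha hb
    | inv a ha => exact inv_mem ha

lemma hom_ext_of_gen {M N : Type*} [Group M] [Group N] {f g : M →* N} {s : Set M}
    (hs : Subgroup.closure s = ⊤) (h : ∀ x ∈ s, f x = g x) : f = g := by
  ext x
  have hx : x ∈ Subgroup.closure s := by rw [hs]; trivial
  induction hx using Subgroup.closure_induction with
  | mem y hy => exact h y hy
  | one => simp
  | mul a b _ _ ha hb => simp only [map_mul, ha, hb]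
  | inv a _ ha => simp only [map_inv, ha]

lemma envel_conj (h g : G) :
    Rack.toEnvelGroup (Quandle.Conj G) h * Rack.toEnvelGroup (Quandle.Conj G) g *
      (Rack.toEnvelGroup (Quandle.Conj G) h)⁻¹ =
      Rack.toEnvelGroup (Quandle.Conj G) (h * g * h⁻¹) := by
  have := (Rack.toEnvelGroup (Quandle.Conj G)).map_act (x := h) (y := g)
  rw [Quandle.conj_act_eq_conj] at this
  exact this.symm

/-- Conjugation in the enveloping group of `Conj G` factors through `π`. -/
lemma envel_conj_pi (π : Rack.EnvelGroup (Quandle.Conj G) →* G)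
    (hπ : ∀ g : G, π (Rack.toEnvelGroup (Quandle.Conj G) g) = g)
    (a : Rack.EnvelGroup (Quandle.Conj G)) (g : G) :
    a * Rack.toEnvelGroup (Quandle.Conj G) g * a⁻¹ =
      Rack.toEnvelGroup (Quandle.Conj G) (π a * g * (π a)⁻¹) := by
  have ha : a ∈ Subgroup.closure (Set.range (Rack.toEnvelGroup (Quandle.Conj G))) := by
    rw [envel_closure]; trivial
  revert g
  induction ha using Subgroup.closure_induction with
  | mem y hy =>
    intro g
    obtain ⟨h, rfl⟩ := hy
    rw [envel_conj, hπ]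
  | one => intro g; simp
  | mul a b _ _ ha hb =>
    intro g
    calc a * b * Rack.toEnvelGroup (Quandle.Conj G) g * (a * b)⁻¹
        = a * (b * Rack.toEnvelGroup (Quandle.Conj G) g * b⁻¹) * a⁻¹ := by group
      _ = a * Rack.toEnvelGroup (Quandle.Conj G) (π b * g * (π b)⁻¹) * a⁻¹ := by rw [hb]
      _ = Rack.toEnvelGroup (Quandle.Conj G) (π a * (π b * g * (π b)⁻¹) * (π a)⁻¹) := ha _
      _ = Rack.toEnvelGroup (Quandle.Conj G) (π (a * b) * g * (π (a * b))⁻¹) := by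
          rw [π.map_mul]; congr 1; group
  | inv a _ ha =>
    intro g
    have h1 := ha (π a⁻¹ * g * (π a⁻¹)⁻¹)
    have h2 : π a * (π a⁻¹ * g * (π a⁻¹)⁻¹) * (π a)⁻¹ = g := by
      rw [π.map_inv]; group
    rw [h2] at h1
    rw [← h1]; group

lemma ker_le_center (π : Rack.EnvelGroup (Quandle.Conj G) →* G)
    (hπ : ∀ g : G, π (Rack.toEnvelGroup (Quandle.Conj G) g) = g) :
    π.ker ≤ Subgroup.center (Rack.EnvelGroup (Quandle.Conj G)) := by
  intro z hz
  rw [Subgroup.mem_center_iff]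
  intro a
  have ha : a ∈ Subgroup.closure (Set.range (Rack.toEnvelGroup (Quandle.Conj G))) := by
    rw [envel_closure]; trivial
  induction ha using Subgroup.closure_induction with
  | mem y hy =>
    obtain ⟨h, rfl⟩ := hy
    have key := envel_conj_pi π hπ z h
    rw [MonoidHom.mem_ker.mp hz] at key
    simp only [one_mul, inv_one, mul_one] at key
    calc Rack.toEnvelGroup (Quandle.Conj G) h * z
        = (z * Rack.toEnvelGroup (Quandle.Conj G) h * z⁻¹) * z := by rw [key]
      _ = z * Rack.toEnvelGroup (Quandle.Conj G) h := by group
  | one => simp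
  | mul a b ha' hb' ha hb => rw [mul_assoc, hb, ← mul_assoc, ha, mul_assoc]
  | inv a ha' ha =>
    calc a⁻¹ * z = a⁻¹ * (z * a) * a⁻¹ := by group
      _ = a⁻¹ * (a * z) * a⁻¹ := by rw [← ha]
      _ = z * a⁻¹ := by group

end Aux

open Rack Quandle Quandles

section Main

variable {G : Type*} [Group G]

/-- The quandle morphism from `Conj G` sending `g` to the basis vector of its conjugacy class. -/
noncomputable def fSingle : Quandle.Conj G →◃ Quandle.Conj (Multiplicative (ConjClasses G →₀ ℤ)) where
  toFun g := Multiplicative.ofAdd (Finsupp.single (ConjClasses.mk g) 1)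
  map_act' := by
    intro x y
    rw [Quandle.conj_act_eq_conj, Quandle.conj_act_eq_conj]
    have h1 : ConjClasses.mk ((x : G) * y * x⁻¹) = ConjClasses.mk y :=
      ConjClasses.mk_eq_mk_iff_isConj.2 (isConj_iff.2 ⟨x, rfl⟩).symm
    show Multiplicative.ofAdd (Finsupp.single (ConjClasses.mk ((x:G) * y * x⁻¹)) (1:ℤ)) = _
    rw [h1, mul_right_comm, mul_inv_cancel, one_mul]

noncomputable def ρMap : Rack.EnvelGroup (Quandle.Conj G) →* Multiplicative (ConjClasses G →₀ ℤ) :=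
  Rack.toEnvelGroup.map fSingle

lemma ρMap_apply (g : G) :
    ρMap (Rack.toEnvelGroup (Quandle.Conj G) g) =
      Multiplicative.ofAdd (Finsupp.single (ConjClasses.mk g) 1) := rfl

lemma mk_out_eq (c : ConjClasses G) : ConjClasses.mk (Quotient.out c) = c := by
  rw [← ConjClasses.quotient_mk_eq_mk]; exact Quotient.out_eq c

lemma ρMap_surj : Function.Surjective (ρMap (G := G)) := by
  intro y
  suffices h : ∀ x : ConjClasses G →₀ ℤ, Multiplicative.ofAdd x ∈ (ρMap (G := G)).range by
    obtain ⟨a, ha⟩ := h y.toAdd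
    exact ⟨a, ha⟩
  intro x
  induction x using Finsupp.induction with
  | zero => exact one_mem _
  | single_add a b f _ _ hf =>
    have hab : Multiplicative.ofAdd (Finsupp.single a b) ∈ (ρMap (G := G)).range := by
      have h1 : Finsupp.single a b = b • Finsupp.single a (1 : ℤ) := by
        rw [Finsupp.smul_single, smul_eq_mul, mul_one]
      have h2 : Multiplicative.ofAdd (Finsupp.single a (1 : ℤ)) ∈ (ρMap (G := G)).range := by
        refine ⟨Rack.toEnvelGroup (Quandle.Conj G) (Quotient.out a), ?_⟩
        rw [ρMap_apply, mk_out_eq]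
      rw [h1, ofAdd_zsmul]
      exact zpow_mem h2 b
    have : Multiplicative.ofAdd (Finsupp.single a b + f) =
        Multiplicative.ofAdd (Finsupp.single a b) * Multiplicative.ofAdd f := rfl
    rw [this]
    exact mul_mem hab hf

/-- The retraction to the abelianization. -/
noncomputable def θMap :
    Multiplicative (ConjClasses G →₀ ℤ) →* Abelianization (Rack.EnvelGroup (Quandle.Conj G)) :=
  AddMonoidHom.toMultiplicativeLeft
    (Finsupp.liftAddHom fun c => zmultiplesHom _
      (Additive.ofMul (Abelianization.of (Rack.toEnvelGroup (Quandle.Conj G) (Quotient.out c)))))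

lemma θMap_comp_ρMap :
    (θMap (G := G)).comp ρMap = Abelianization.of := by
  apply hom_ext_of_gen (envel_closure (Quandle.Conj G))
  rintro x ⟨g, rfl⟩
  show θMap (ρMap (Rack.toEnvelGroup (Quandle.Conj G) g)) = _
  rw [ρMap_apply]
  have h1 : θMap (Multiplicative.ofAdd (Finsupp.single (ConjClasses.mk g) 1)) =
      Abelianization.of
        (Rack.toEnvelGroup (Quandle.Conj G) (Quotient.out (ConjClasses.mk g))) := by
    show Additive.toMul ((Finsupp.liftAddHom fun c => zmultiplesHom _
      (Additive.ofMul (Abelianization.of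
        (Rack.toEnvelGroup (Quandle.Conj G) (Quotient.out c))))) (Finsupp.single _ 1)) = _
    erw [Finsupp.liftAddHom_apply_single]
    simp
    rfl
  rw [h1]
  set w := Quotient.out (ConjClasses.mk g) with hw
  obtain ⟨c, hc⟩ := isConj_iff.1 (ConjClasses.mk_eq_mk_iff_isConj.1 (mk_out_eq (ConjClasses.mk g)))
  rw [← hc, ← envel_conj]
  rw [map_mul, map_mul, map_inv, mul_right_comm, mul_inv_cancel, one_mul]

lemma mem_commutator_of_ρMap_eq_one {z : Rack.EnvelGroup (Quandle.Conj G)}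
    (hz : ρMap z = 1) : z ∈ commutator (Rack.EnvelGroup (Quandle.Conj G)) := by
  have h1 : Abelianization.of z = 1 := by
    rw [← θMap_comp_ρMap]
    show θMap (ρMap z) = 1
    rw [hz, map_one]
  exact (QuotientGroup.eq_one_iff z).mp h1

open scoped commutatorElement in
lemma commutatorSet_finite [Finite G] (π : Rack.EnvelGroup (Quandle.Conj G) →* G)
    (hπ : ∀ g : G, π (Rack.toEnvelGroup (Quandle.Conj G) g) = g) :
    Finite (commutatorSet (Rack.EnvelGroup (Quandle.Conj G))) := by
  have key : ∀ a b : Rack.EnvelGroup (Quandle.Conj G),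
      ⁅a, b⁆ = ⁅Rack.toEnvelGroup (Quandle.Conj G) (π a),
        Rack.toEnvelGroup (Quandle.Conj G) (π b)⁆ := by
    have centr : ∀ z x y : Rack.EnvelGroup (Quandle.Conj G),
        (∀ t, t * z = z * t) → ⁅z * x, y⁆ = ⁅x, y⁆ := by
      intro z x y hz
      have e1 : ⁅z * x, y⁆ = z * (x * y * x⁻¹) * z⁻¹ * y⁻¹ := by
        rw [commutatorElement_def]; group
      have e2 : z * (x * y * x⁻¹) * z⁻¹ = x * y * x⁻¹ := by
        rw [← hz (x * y * x⁻¹)]; group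
      rw [e1, e2, commutatorElement_def]
    have centr' : ∀ z x y : Rack.EnvelGroup (Quandle.Conj G),
        (∀ t, t * z = z * t) → ⁅x, z * y⁆ = ⁅x, y⁆ := by
      intro z x y hz
      rw [← inv_inv ⁅x, z * y⁆, commutatorElement_inv, centr z y x hz,
        ← commutatorElement_inv, inv_inv]
    intro a b
    set u := Rack.toEnvelGroup (Quandle.Conj G) (π a) with hu
    set v := Rack.toEnvelGroup (Quandle.Conj G) (π b) with hv
    have hza : π (a * u⁻¹) = 1 := by rw [map_mul, map_inv, hu, hπ, mul_inv_cancel]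
    have hzb : π (b * v⁻¹) = 1 := by rw [map_mul, map_inv, hv, hπ, mul_inv_cancel]
    have hca := Subgroup.mem_center_iff.1 (ker_le_center π hπ (MonoidHom.mem_ker.mpr hza))
    have hcb := Subgroup.mem_center_iff.1 (ker_le_center π hπ (MonoidHom.mem_ker.mpr hzb))
    have ha : a = (a * u⁻¹) * u := by group
    have hb : b = (b * v⁻¹) * v := by group
    calc ⁅a, b⁆ = ⁅(a * u⁻¹) * u, (b * v⁻¹) * v⁆ := by rw [← ha, ← hb]
      _ = ⁅u, (b * v⁻¹) * v⁆ := centr _ _ _ hca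
      _ = ⁅u, v⁆ := centr' _ _ _ hcb
  have hsub : commutatorSet (Rack.EnvelGroup (Quandle.Conj G)) ⊆
      Set.range (fun p : G × G => ⁅Rack.toEnvelGroup (Quandle.Conj G) p.1,
        Rack.toEnvelGroup (Quandle.Conj G) p.2⁆) := by
    rintro x ⟨a, b, rfl⟩
    exact ⟨(π a, π b), (key a b).symm⟩
  exact ((Set.finite_range _).subset hsub).to_subtype

end Main

/-- A submodule of `C →₀ ℤ` with finite quotient is isomorphic to `C →₀ ℤ`. -/
lemma submodule_equiv_of_finite_quot {C : Type*} [Finite C] (N : Submodule ℤ (C →₀ ℤ))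
    (hfin : Finite ((C →₀ ℤ) ⧸ N)) : Nonempty (N ≃ₗ[ℤ] (C →₀ ℤ)) := by
  classical
  haveI := Fintype.ofFinite C
  set k : ℕ := Nat.card ((C →₀ ℤ) ⧸ N) with hk
  have hkpos : 0 < k := Nat.card_pos
  have hk0 : (k : ℤ) ≠ 0 := by exact_mod_cast hkpos.ne'
  have hmem : ∀ m : C →₀ ℤ, (k : ℤ) • m ∈ N := by
    intro m
    have h1 : k • (Submodule.Quotient.mk m : (C →₀ ℤ) ⧸ N) = 0 := card_nsmul_eq_zero'
    have h2 : (k : ℤ) • (Submodule.Quotient.mk m : (C →₀ ℤ) ⧸ N) = 0 := by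
      rw [natCast_zsmul]; exact h1
    rwa [← Submodule.Quotient.mk_smul, Submodule.Quotient.mk_eq_zero] at h2
  -- the injective linear map `m ↦ k • m` into `N`
  let l : (C →₀ ℤ) →ₗ[ℤ] N :=
    { toFun := fun m => ⟨(k : ℤ) • m, hmem m⟩
      map_add' := fun x y => by ext; simp [smul_add]
      map_smul' := fun c x => by ext; simp only [Submodule.coe_smul, RingHom.id_apply]; rw [smul_comm] }
  have hl : Function.Injective l := by
    intro x y hxy
    have : (k : ℤ) • x = (k : ℤ) • y := congrArg Subtype.val hxy
    exact smul_right_injective _ hk0 this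
  haveI : Module.Finite ℤ N := Module.Finite.iff_fg.mpr (IsNoetherian.noetherian N)
  have hle : Module.finrank ℤ (C →₀ ℤ) ≤ Module.finrank ℤ N :=
    LinearMap.finrank_le_finrank_of_injective hl
  have hge : Module.finrank ℤ N ≤ Module.finrank ℤ (C →₀ ℤ) := N.finrank_le
  have hrank : Module.finrank ℤ N = Module.finrank ℤ (C →₀ ℤ) := le_antisymm hge hle
  haveI : Module.Free ℤ N := inferInstance
  let b := Module.Free.chooseBasis ℤ N
  have hcard : Fintype.card (Module.Free.ChooseBasisIndex ℤ N) = Fintype.card C := by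
    rw [← Module.finrank_eq_card_chooseBasisIndex, hrank, Module.finrank_finsupp_self]
  exact ⟨b.equiv Finsupp.basisSingleOne (Fintype.equivOfCardEq hcard)⟩

/-- For a finite group `G`, with `π : A(G) → G` the canonical homomorphism and
`Z₁ = ker π`, the quotient of `Z₁` by its torsion subgroup is isomorphic as a group to the
free abelian group on the set of conjugacy classes of `G`. -/
theorem stmt15 {G : Type*} [Group G] [Finite G]
    (π : Rack.EnvelGroup (Quandle.Conj G) →* G)
    (hπ : ∀ g : G, π (Rack.toEnvelGroup (Quandle.Conj G) g) = g)
    (T : Subgroup π.ker) [T.Normal]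
    (hT : ∀ z : π.ker, z ∈ T ↔ IsOfFinOrder z) :
    Nonempty ((π.ker ⧸ T) ≃* Multiplicative (FreeAbelianGroup (ConjClasses G))) := by
  classical
  let ψ' : π.ker →* Multiplicative (ConjClasses G →₀ ℤ) := ρMap.comp π.ker.subtype
  haveI : Finite (commutatorSet (Rack.EnvelGroup (Quandle.Conj G))) := commutatorSet_finite π hπ
  have hker : ψ'.ker = T := by
    ext z
    rw [MonoidHom.mem_ker, hT]
    constructor
    · intro h
      have hz : (z : Rack.EnvelGroup (Quandle.Conj G)) ∈
          commutator (Rack.EnvelGroup (Quandle.Conj G)) := mem_commutator_of_ρMap_eq_one h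
      set k := Nat.card (commutator (Rack.EnvelGroup (Quandle.Conj G))) with hk
      have hkpos : 0 < k := Nat.card_pos
      have h2 : (⟨(z : Rack.EnvelGroup (Quandle.Conj G)), hz⟩ :
          commutator (Rack.EnvelGroup (Quandle.Conj G))) ^ k = 1 := pow_card_eq_one'
      have h3 : (z : Rack.EnvelGroup (Quandle.Conj G)) ^ k = 1 := by
        have := congrArg Subtype.val h2
        simpa using this
      refine isOfFinOrder_iff_pow_eq_one.2 ⟨k, hkpos, ?_⟩
      ext
      simpa using h3
    · intro h
      obtain ⟨n, hn, hzn⟩ := isOfFinOrder_iff_pow_eq_one.1 h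
      have h1 : (ψ' z) ^ n = 1 := by rw [← map_pow, hzn, map_one]
      have h2 : (n : ℤ) • (ψ' z).toAdd = 0 := by
        rw [natCast_zsmul, ← toAdd_pow, h1]; rfl
      have h3 : (ψ' z).toAdd = 0 :=
        (smul_eq_zero.mp h2).resolve_left (by exact_mod_cast hn.ne')
      calc ψ' z = Multiplicative.ofAdd (ψ' z).toAdd := rfl
        _ = 1 := by rw [h3]; rfl
  let e1 : (π.ker ⧸ T) ≃* ψ'.range :=
    (QuotientGroup.quotientMulEquivOfEq hker.symm).trans (QuotientGroup.quotientKerEquivRange ψ')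
  let N : Submodule ℤ (ConjClasses G →₀ ℤ) :=
    { carrier := {x | Multiplicative.ofAdd x ∈ ψ'.range}
      add_mem' := fun {x y} hx hy =>
        show Multiplicative.ofAdd (x + y) ∈ ψ'.range from mul_mem hx hy
      zero_mem' := show Multiplicative.ofAdd (0 : ConjClasses G →₀ ℤ) ∈ ψ'.range from one_mem _
      smul_mem' := fun c x hx => by
        show Multiplicative.ofAdd (c • x) ∈ ψ'.range
        rw [ofAdd_zsmul]
        exact zpow_mem hx c }
  let e2 : ψ'.range ≃* Multiplicative N :=
    { toFun := fun x =>
        Multiplicative.ofAdd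
          (⟨(x : Multiplicative (ConjClasses G →₀ ℤ)).toAdd, x.2⟩ : N)
      invFun := fun y => ⟨Multiplicative.ofAdd ((y.toAdd : N) : ConjClasses G →₀ ℤ), y.toAdd.2⟩
      left_inv := fun x => rfl
      right_inv := fun y => rfl
      map_mul' := fun x y => rfl }
  have hNfin : Finite ((ConjClasses G →₀ ℤ) ⧸ N) := by
    have hsurj : Function.Surjective (fun g : G =>
        (Submodule.Quotient.mk
          ((ρMap (Rack.toEnvelGroup (Quandle.Conj G) g)).toAdd) : _ ⧸ N)) := by
      intro q
      obtain ⟨x, rfl⟩ := Submodule.Quotient.mk_surjective N q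
      obtain ⟨a, ha⟩ := ρMap_surj (Multiplicative.ofAdd x)
      refine ⟨π a, ?_⟩
      rw [Submodule.Quotient.eq]
      show Multiplicative.ofAdd
        ((ρMap (Rack.toEnvelGroup (Quandle.Conj G) (π a))).toAdd - x) ∈ ψ'.range
      have hz : Rack.toEnvelGroup (Quandle.Conj G) (π a) * a⁻¹ ∈ π.ker := by
        rw [MonoidHom.mem_ker, map_mul, map_inv, hπ, mul_inv_cancel]
      refine ⟨⟨_, hz⟩, ?_⟩
      show ρMap (Rack.toEnvelGroup (Quandle.Conj G) (π a) * a⁻¹) = _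
      rw [map_mul, map_inv, ha, ofAdd_sub, div_eq_mul_inv, ofAdd_toAdd]
    exact Finite.of_surjective _ hsurj
  obtain ⟨eN⟩ := submodule_equiv_of_finite_quot N hNfin
  exact ⟨(e1.trans e2).trans (AddEquiv.toMultiplicative
    (eN.toAddEquiv.trans (FreeAbelianGroup.equivFinsupp (ConjClasses G)).symm))⟩
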